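/- Let n ≥ 1 and let A = (a_{ij}) ∈ (𝕊max^∨)^{n×n} be a symmetric matrix. Then A is tropical positive definite if and only if 𝟘 < a_{ii} for every i ∈ [n], and a_{ij} ⊙ a_{ij} < a_{ii} ⊙ a_{jj} for all i, j ∈ [n] with i ≠ j. -/

import Mathlib

/-!
Common framework: the symmetrized tropical semiring 𝕊max over a linearly
ordered abelian group Γ, represented concretely: an element is either 𝟘
(represented by `none`) or a pair of a modulus `c : Γ` and a sign
(positive, negative or balanced), matching the classes of the quotient
𝕋max²/ℛ described in the paper.
-/

namespace TropPaper

inductive SSign : Type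
  | pos
  | neg
  | bal
  deriving DecidableEq

/-- The symmetrized tropical semiring 𝕊max(Γ): `none` is 𝟘, and
`some (c, s)` is the class of modulus `c` and sign `s`. -/
def Smax (Γ : Type) : Type := Option (Γ × SSign)

/-- Γ is divisible. -/
def DivisibleGrp (Γ : Type) [AddCommGroup Γ] : Prop :=
  ∀ k : ℕ, 0 < k → ∀ a : Γ, ∃ b : Γ, k • b = a

section Defs

variable {Γ : Type} [AddCommGroup Γ] [LinearOrder Γ] [IsOrderedAddMonoid Γ]

/-- 𝟘 -/
def szero : Smax Γ := none

/-- 𝟙 -/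
def sone : Smax Γ := some ((0 : Γ), SSign.pos)

/-- modulus |·| : 𝕊max → 𝕋max = WithBot Γ -/
def smod : Smax Γ → WithBot Γ
  | none => ⊥
  | some (c, _) => (c : WithBot Γ)

def sgnMul : SSign → SSign → SSign
  | SSign.pos, t => t
  | SSign.neg, SSign.pos => SSign.neg
  | SSign.neg, SSign.neg => SSign.pos
  | SSign.neg, SSign.bal => SSign.bal
  | SSign.bal, _ => SSign.bal

/-- ⊕ on 𝕊max -/
def sadd : Smax Γ → Smax Γ → Smax Γ
  | none, b => b
  | some a, none => some a
  | some (c, s), some (d, t) =>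
      if c < d then some (d, t)
      else if d < c then some (c, s)
      else some (c, if s = t then s else SSign.bal)

/-- ⊖ (unary) on 𝕊max -/
def sneg : Smax Γ → Smax Γ
  | none => none
  | some (c, SSign.pos) => some (c, SSign.neg)
  | some (c, SSign.neg) => some (c, SSign.pos)
  | some (c, SSign.bal) => some (c, SSign.bal)

/-- ⊙ on 𝕊max -/
def smul : Smax Γ → Smax Γ → Smax Γ
  | none, _ => none
  | some _, none => none
  | some (c, s), some (d, t) => some (c + d, sgnMul s t)

/-- a ⊖ b -/
def ssub (a b : Smax Γ) : Smax Γ := sadd a (sneg b)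

/-- a° = a ⊖ a -/
def sbal (a : Smax Γ) : Smax Γ := ssub a a

/-- the positive element with the same modulus (|·| seen inside 𝕊max⊕) -/
def sabs : Smax Γ → Smax Γ
  | none => none
  | some (c, _) => some (c, SSign.pos)

/-- multiplicative inverse (of invertible, i.e. signed nonzero, elements) -/
def sinv : Smax Γ → Smax Γ
  | none => none
  | some (c, s) => some (-c, s)

/-- a^{⊙k} -/
def spow (a : Smax Γ) : ℕ → Smax Γ
  | 0 => sone
  | k + 1 => smul a (spow a k)

/-- membership in 𝕊max° (balanced elements together with 𝟘) -/
def IsBal : Smax Γ → Prop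
  | none => True
  | some (_, s) => s = SSign.bal

/-- membership in 𝕊max⊕ (positive elements together with 𝟘) -/
def IsPos : Smax Γ → Prop
  | none => True
  | some (_, s) => s = SSign.pos

/-- membership in 𝕊max^∨ (signed elements) -/
def IsSigned : Smax Γ → Prop
  | none => True
  | some (_, s) => s ≠ SSign.bal

/-- the balance relation a ∇ b -/
def Balance (a b : Smax Γ) : Prop := IsBal (ssub a b)

/-- a ⪯ b -/
def natLe (a b : Smax Γ) : Prop := sadd a b = b

/-- a ≤ b :⟺ b ⊖ a ∈ 𝕊max⊕ ∪ 𝕊max° -/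
def sle (a b : Smax Γ) : Prop := IsPos (ssub b a) ∨ IsBal (ssub b a)

/-- a < b :⟺ b ⊖ a ∈ 𝕊max⊕ ∖ {𝟘} -/
def slt (a b : Smax Γ) : Prop := IsPos (ssub b a) ∧ ssub b a ≠ szero

/-- finite ⊕-sum over a list -/
def sumS {α : Type} (l : List α) (f : α → Smax Γ) : Smax Γ :=
  (l.map f).foldr sadd szero

/-- finite ⊙-product over a list -/
def prodS {α : Type} (l : List α) (f : α → Smax Γ) : Smax Γ :=
  (l.map f).foldr smul sone

/-- the zero vector -/
def zeroVecS {n : ℕ} : Fin n → Smax Γ := fun _ => szero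

def VecSigned {n : ℕ} (x : Fin n → Smax Γ) : Prop := ∀ i, IsSigned (x i)

def MatSigned {n : ℕ} (A : Matrix (Fin n) (Fin n) (Smax Γ)) : Prop :=
  ∀ i j, IsSigned (A i j)

def SymmS {n : ℕ} (A : Matrix (Fin n) (Fin n) (Smax Γ)) : Prop :=
  ∀ i j, A i j = A j i

/-- A ⊙ v -/
def matVecS {n : ℕ} (A : Matrix (Fin n) (Fin n) (Smax Γ)) (v : Fin n → Smax Γ) :
    Fin n → Smax Γ :=
  fun i => sumS (List.finRange n) fun j => smul (A i j) (v j)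

/-- A ⊙ B -/
def matMulS {n : ℕ} (A B : Matrix (Fin n) (Fin n) (Smax Γ)) :
    Matrix (Fin n) (Fin n) (Smax Γ) :=
  Matrix.of fun i j => sumS (List.finRange n) fun l => smul (A i l) (B l j)

/-- the identity matrix I -/
def idMatS {n : ℕ} : Matrix (Fin n) (Fin n) (Smax Γ) :=
  Matrix.of fun i j => if i = j then sone else szero

/-- xᵀ ⊙ A ⊙ x -/
def quadFormS {n : ℕ} (A : Matrix (Fin n) (Fin n) (Smax Γ)) (x : Fin n → Smax Γ) :
    Smax Γ :=
  sumS (List.finRange n) fun i => sumS (List.finRange n) fun j =>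
    smul (x i) (smul (A i j) (x j))

/-- tropical positive definiteness (the quadratic-form condition) -/
def TPD {n : ℕ} (A : Matrix (Fin n) (Fin n) (Smax Γ)) : Prop :=
  ∀ x : Fin n → Smax Γ, VecSigned x → x ≠ zeroVecS → slt szero (quadFormS A x)

/-- tropical positive semidefiniteness -/
def TPSD {n : ℕ} (A : Matrix (Fin n) (Fin n) (Smax Γ)) : Prop :=
  ∀ x : Fin n → Smax Γ, VecSigned x → x ≠ zeroVecS → sle szero (quadFormS A x)

/-- sgn(π) ∈ {𝟙, ⊖𝟙} -/
def permSignS {n : ℕ} (π : Equiv.Perm (Fin n)) : Smax Γ :=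
  if (Equiv.Perm.sign π : ℤ) = 1 then sone else sneg sone

/-- the determinant over 𝕊max -/
noncomputable def detS {n : ℕ} (M : Matrix (Fin n) (Fin n) (Smax Γ)) : Smax Γ :=
  sumS (Finset.univ : Finset (Equiv.Perm (Fin n))).toList fun π =>
    smul (permSignS π) (prodS (List.finRange n) fun i => M i (π i))

/-- the adjugate matrix over 𝕊max -/
noncomputable def adjS {n : ℕ} (M : Matrix (Fin (n+1)) (Fin (n+1)) (Smax Γ)) :
    Matrix (Fin (n+1)) (Fin (n+1)) (Smax Γ) :=
  Matrix.of fun i j =>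
    smul (spow (sneg sone) (i.val + j.val))
      (detS (Matrix.of fun a b : Fin n => M (Fin.succAbove j a) (Fin.succAbove i b)))

/-- γ ⊙ I ⊖ A -/
def charMatS {n : ℕ} (γ : Smax Γ) (A : Matrix (Fin n) (Fin n) (Smax Γ)) :
    Matrix (Fin n) (Fin n) (Smax Γ) :=
  Matrix.of fun i j => ssub (smul γ (idMatS i j)) (A i j)

/-- tr_k(A) = ⊕_{|K| = k} det(A[K,K]) -/
noncomputable def trkS {n : ℕ} (k : ℕ) (A : Matrix (Fin n) (Fin n) (Smax Γ)) : Smax Γ :=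
  sumS ((Finset.univ : Finset (Fin n)).powersetCard k).attach.toList fun K =>
    detS (Matrix.of fun a b : Fin k =>
      A (K.1.orderEmbOfFin (Finset.mem_powersetCard.mp K.2).2 a)
        (K.1.orderEmbOfFin (Finset.mem_powersetCard.mp K.2).2 b))

/-- matrix power A^{⊙k} -/
def matPowS {n : ℕ} (A : Matrix (Fin n) (Fin n) (Smax Γ)) :
    ℕ → Matrix (Fin n) (Fin n) (Smax Γ)
  | 0 => idMatS
  | k + 1 => matMulS A (matPowS A k)

/-- partial Kleene sums I ⊕ A ⊕ ⋯ ⊕ A^{⊙m} -/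
def starPartialS {n : ℕ} (A : Matrix (Fin n) (Fin n) (Smax Γ)) (m : ℕ) :
    Matrix (Fin n) (Fin n) (Smax Γ) :=
  Matrix.of fun i j => sumS (List.range (m+1)) fun k => matPowS A k i j

/-- the diagonal matrix D^(k) with diagonal (γ₁,…,γ_{k−1},𝟘,…,𝟘) (0-based k) -/
def DmatS {n : ℕ} (A : Matrix (Fin n) (Fin n) (Smax Γ)) (k : Fin n) :
    Matrix (Fin n) (Fin n) (Smax Γ) :=
  Matrix.of fun i j => if i = j ∧ i < k then A i i else szero

/-- the complementary matrix A^(k) -/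
def AmatS {n : ℕ} (A : Matrix (Fin n) (Fin n) (Smax Γ)) (k : Fin n) :
    Matrix (Fin n) (Fin n) (Smax Γ) :=
  Matrix.of fun i j => if i ≠ j ∨ k ≤ i then A i j else szero

/-- M = (γ⊙I ⊖ D^(k))^{⊙−1} ⊙ A^(k) -/
def MmatS {n : ℕ} (A : Matrix (Fin n) (Fin n) (Smax Γ)) (k : Fin n) :
    Matrix (Fin n) (Fin n) (Smax Γ) :=
  Matrix.of fun i j =>
    smul (sinv (if i < k then sneg (A i i) else A k k)) (AmatS A k i j)

/-- λ_k = (⊖𝟙)^{⊙(k−1)} ⊙ γ₁ ⊙ ⋯ ⊙ γ_{k−1} ⊙ γ^{⊙(n−k)} (0-based k, size n) -/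
def lamkS {n : ℕ} (A : Matrix (Fin n) (Fin n) (Smax Γ)) (k : Fin n) : Smax Γ :=
  smul (spow (sneg sone) k.val)
    (smul (prodS ((List.finRange n).filter (fun i => i < k)) fun i => A i i)
      (spow (A k k) (n - 1 - k.val)))

/-- irreducibility: the digraph of nonzero entries is strongly connected -/
def IrreducibleS {n : ℕ} (A : Matrix (Fin n) (Fin n) (Smax Γ)) : Prop :=
  ∀ i j : Fin n, Relation.ReflTransGen (fun a b => A a b ≠ szero) i j

/-- diagonal entries sorted non-increasingly for ⪯ -/
def DiagSortedS {n : ℕ} (A : Matrix (Fin n) (Fin n) (Smax Γ)) : Prop :=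
  ∀ i j : Fin n, i ≤ j → natLe (A j j) (A i i)

/-! 𝕋max-side notions (for the characteristic polynomial of |A|). -/

/-- finite max over a list in 𝕋max -/
def sumT {α : Type} (l : List α) (f : α → WithBot Γ) : WithBot Γ :=
  (l.map f).foldr max ⊥

/-- finite ⊙-product over a list in 𝕋max -/
def prodT {α : Type} (l : List α) (f : α → WithBot Γ) : WithBot Γ :=
  (l.map f).foldr (· + ·) (0 : WithBot Γ)

/-- the permanent over 𝕋max -/
noncomputable def perT {n : ℕ} (M : Matrix (Fin n) (Fin n) (WithBot Γ)) : WithBot Γ :=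
  sumT (Finset.univ : Finset (Equiv.Perm (Fin n))).toList fun π =>
    prodT (List.finRange n) fun i => M i (π i)

/-- coefficient of X^k in the 𝕋max-characteristic polynomial of B -/
noncomputable def charCoeffT {n : ℕ} (B : Matrix (Fin n) (Fin n) (WithBot Γ)) (k : ℕ) : WithBot Γ :=
  if k ≤ n then
    sumT ((Finset.univ : Finset (Fin n)).powersetCard (n - k)).attach.toList fun K =>
      perT (Matrix.of fun a b : Fin (n - k) =>
        B (K.1.orderEmbOfFin (Finset.mem_powersetCard.mp K.2).2 a)
          (K.1.orderEmbOfFin (Finset.mem_powersetCard.mp K.2).2 b))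
  else ⊥

/-- multiplicity of x as a 𝕋max-root of the formal polynomial of degree ≤ n
with coefficients Q: for x = ⊥ it is the lower degree, for x = c ∈ Γ it is the
difference between the largest and smallest exponents attaining
max_k (Q_k + k·c). -/
noncomputable def rootMultT (n : ℕ) (Q : ℕ → WithBot Γ) (x : WithBot Γ) : ℕ :=
  WithBot.recBotCoe
    (sInf {k | Q k ≠ ⊥})
    (fun c =>
      sSup {k | k ≤ n ∧ Q k + ((k • c : Γ) : WithBot Γ)
              = sumT (List.range (n+1)) (fun l => Q l + ((l • c : Γ) : WithBot Γ))}
        - sInf {k | k ≤ n ∧ Q k + ((k • c : Γ) : WithBot Γ)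
              = sumT (List.range (n+1)) (fun l => Q l + ((l • c : Γ) : WithBot Γ))})
    x

end Defs

/-- the signed valuation associated with a valuation v on an ordered field L -/
def svMap {Γ : Type} [AddCommGroup Γ] [LinearOrder Γ] [IsOrderedAddMonoid Γ] {L : Type} [Field L] [LinearOrder L] [IsStrictOrderedRing L]
    (v : L → WithBot Γ) (b : L) : Smax Γ :=
  if b = 0 then szero
  else if 0 < b then WithBot.recBotCoe szero (fun c => some (c, SSign.pos)) (v b)
  else WithBot.recBotCoe szero (fun c => some (c, SSign.neg)) (v b)

end TropPaper

namespace TropPaper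

/-! ### Auxiliary lemmas for the TPD characterization -/

section Aux

variable {Γ : Type} [AddCommGroup Γ] [LinearOrder Γ] [IsOrderedAddMonoid Γ]

/-- the negative part of an element of 𝕊max -/
def negPart : Smax Γ → WithBot Γ
  | none => ⊥
  | some (_, SSign.pos) => ⊥
  | some (c, SSign.neg) => (c : WithBot Γ)
  | some (c, SSign.bal) => (c : WithBot Γ)

lemma sadd_none_right (a : Smax Γ) : sadd a (none : Smax Γ) = a := by
  rcases a with _ | ⟨c, s⟩ <;> rfl

lemma sadd_self (a : Smax Γ) : sadd a a = a := by
  rcases a with _ | ⟨c, s⟩ <;> simp [sadd] <;> rfl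

lemma ssub_szero (a : Smax Γ) : ssub a szero = a := by
  rcases a with _ | ⟨c, s⟩ <;> rfl

lemma slt_szero_iff (a : Smax Γ) : slt szero a ↔ ∃ c : Γ, a = some (c, SSign.pos) := by
  rw [slt, ssub_szero]
  constructor
  · rintro ⟨h1, h2⟩
    rcases a with _ | ⟨c, s⟩
    · exact absurd rfl h2
    · exact ⟨c, by rw [show s = SSign.pos from h1]⟩
  · rintro ⟨c, rfl⟩
    exact ⟨rfl, by simp [szero]; exact Option.some_ne_none _⟩

lemma negPart_le_smod (a : Smax Γ) : negPart a ≤ smod a := by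
  rcases a with _ | ⟨c, s⟩
  · exact le_refl _
  · rcases s <;> simp [negPart, smod]

lemma smod_sadd (a b : Smax Γ) : smod (sadd a b) = max (smod a) (smod b) := by
  rcases a with _ | ⟨c, s⟩ <;> rcases b with _ | ⟨d, t⟩
  · rfl
  · simp [sadd, smod]
  · simp [sadd, smod]
  · rcases lt_trichotomy c d with h | h | h
    · simp [sadd, smod, h, le_of_lt h]
    · subst h; simp [sadd, smod]
    · simp [sadd, smod, h, not_lt.2 (le_of_lt h), le_of_lt h]

lemma negPart_sadd_le (a b : Smax Γ) :
    negPart (sadd a b) ≤ max (negPart a) (negPart b) := by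
  rcases a with _ | ⟨c, s⟩ <;> rcases b with _ | ⟨d, t⟩
  · exact le_refl _
  · simp [sadd]
  · exact le_max_left _ _
  · rcases lt_trichotomy c d with h | h | h
    · simp [sadd, h]
    · subst h
      simp only [sadd, lt_irrefl, if_false]
      by_cases hst : s = t
      · subst hst; simp
      · rcases s <;> rcases t <;> simp_all [negPart]
    · simp [sadd, h, not_lt.2 (le_of_lt h)]

lemma sadd_pos_left {M : Γ} {b : Smax Γ} (hb1 : smod b ≤ (M : WithBot Γ))
    (hb2 : negPart b < (M : WithBot Γ)) :
    sadd (some (M, SSign.pos)) b = some (M, SSign.pos) := by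
  rcases b with _ | ⟨d, t⟩
  · rfl
  · have hdM : d ≤ M := by simpa [smod] using hb1
    rcases t with _ | _ | _
    · rcases lt_or_eq_of_le hdM with h | h
      · simp [sadd, h, not_lt.2 (le_of_lt h)]; rfl
      · subst h; simp [sadd]; rfl
    · have : (d : WithBot Γ) < M := hb2
      have hd : d < M := by exact_mod_cast this
      simp [sadd, hd, not_lt.2 (le_of_lt hd)]; rfl
    · have : (d : WithBot Γ) < M := hb2
      have hd : d < M := by exact_mod_cast this
      simp [sadd, hd, not_lt.2 (le_of_lt hd)]; rfl

lemma sadd_pos_right {M : Γ} {b : Smax Γ} (hb1 : smod b ≤ (M : WithBot Γ))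
    (hb2 : negPart b < (M : WithBot Γ)) :
    sadd b (some (M, SSign.pos)) = some (M, SSign.pos) := by
  rcases b with _ | ⟨d, t⟩
  · rfl
  · have hdM : d ≤ M := by simpa [smod] using hb1
    rcases t with _ | _ | _
    · rcases lt_or_eq_of_le hdM with h | h
      · simp [sadd, h, not_lt.2 (le_of_lt h)]; rfl
      · subst h; simp [sadd]; rfl
    · have : (d : WithBot Γ) < M := hb2
      have hd : d < M := by exact_mod_cast this
      simp [sadd, hd, not_lt.2 (le_of_lt hd)]; rfl
    · have : (d : WithBot Γ) < M := hb2
      have hd : d < M := by exact_mod_cast this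
      simp [sadd, hd, not_lt.2 (le_of_lt hd)]; rfl

lemma negPart_sadd_eq_left {M : Γ} {a b : Smax Γ} (ha2 : negPart a = (M : WithBot Γ))
    (hb : smod b ≤ (M : WithBot Γ)) : negPart (sadd a b) = (M : WithBot Γ) := by
  rcases a with _ | ⟨c, s⟩
  · exact absurd ha2.symm (by simp [negPart])
  · rcases b with _ | ⟨d, t⟩
    · exact ha2
    · have hdM : d ≤ M := by simpa [smod] using hb
      rcases s with _ | _ | _
      · exact absurd ha2.symm (by simp [negPart])
      · have hc : c = M := by simpa [negPart] using ha2
        subst hc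
        rcases lt_or_eq_of_le hdM with h | h
        · simp [sadd, h, not_lt.2 (le_of_lt h), negPart]
        · subst h
          rcases t <;> simp [sadd, negPart]
      · have hc : c = M := by simpa [negPart] using ha2
        subst hc
        rcases lt_or_eq_of_le hdM with h | h
        · simp [sadd, h, not_lt.2 (le_of_lt h), negPart]
        · subst h
          rcases t <;> simp [sadd, negPart]

lemma negPart_sadd_eq_right {M : Γ} {a b : Smax Γ} (hb2 : negPart b = (M : WithBot Γ))
    (ha : smod a ≤ (M : WithBot Γ)) : negPart (sadd a b) = (M : WithBot Γ) := by
  rcases b with _ | ⟨d, t⟩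
  · exact absurd hb2.symm (by simp [negPart])
  · rcases a with _ | ⟨c, s⟩
    · exact hb2
    · have hcM : c ≤ M := by simpa [smod] using ha
      rcases t with _ | _ | _
      · exact absurd hb2.symm (by simp [negPart])
      · have hd : d = M := by simpa [negPart] using hb2
        subst hd
        rcases lt_or_eq_of_le hcM with h | h
        · simp [sadd, h, negPart]
        · subst h
          rcases s <;> simp [sadd, negPart]
      · have hd : d = M := by simpa [negPart] using hb2
        subst hd
        rcases lt_or_eq_of_le hcM with h | h
        · simp [sadd, h, negPart]
        · subst h
          rcases s <;> simp [sadd, negPart]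

/-! list sum lemmas -/

lemma sumS_cons {α : Type} (a : α) (l : List α) (f : α → Smax Γ) :
    sumS (a :: l) f = sadd (f a) (sumS l f) := rfl

lemma smod_sumS_le {α : Type} {l : List α} {f : α → Smax Γ} {M : WithBot Γ}
    (h : ∀ a ∈ l, smod (f a) ≤ M) : smod (sumS l f) ≤ M := by
  induction l with
  | nil => exact bot_le
  | cons a t ih =>
    rw [sumS_cons, smod_sadd]
    exact max_le (h a (by simp)) (ih fun b hb => h b (by simp [hb]))

lemma negPart_sumS_lt {α : Type} {l : List α} {f : α → Smax Γ} {M : Γ}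
    (h : ∀ a ∈ l, negPart (f a) < (M : WithBot Γ)) :
    negPart (sumS l f) < (M : WithBot Γ) := by
  induction l with
  | nil => exact_mod_cast WithBot.bot_lt_coe M
  | cons a t ih =>
    rw [sumS_cons]
    refine lt_of_le_of_lt (negPart_sadd_le _ _) (max_lt (h a (by simp))
      (ih fun b hb => h b (by simp [hb])))

lemma sumS_eq_pos {α : Type} {l : List α} {f : α → Smax Γ} {M : Γ}
    (h1 : ∀ a ∈ l, smod (f a) ≤ (M : WithBot Γ) ∧ negPart (f a) < (M : WithBot Γ))
    (h2 : ∃ a ∈ l, f a = some (M, SSign.pos)) :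
    sumS l f = some (M, SSign.pos) := by
  induction l with
  | nil => rcases h2 with ⟨a, ha, _⟩; exact absurd ha List.not_mem_nil
  | cons a t ih =>
    rw [sumS_cons]
    rcases h2 with ⟨b, hb, hfb⟩
    rcases List.mem_cons.mp hb with rfl | hbt
    · rw [hfb]
      exact sadd_pos_left
        (smod_sumS_le fun c hc => (h1 c (by simp [hc])).1)
        (negPart_sumS_lt fun c hc => (h1 c (by simp [hc])).2)
    · rw [ih (fun c hc => h1 c (by simp [hc])) ⟨b, hbt, hfb⟩]
      exact sadd_pos_right (h1 a (by simp)).1 (h1 a (by simp)).2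

lemma negPart_sumS_eq {α : Type} {l : List α} {f : α → Smax Γ} {M : Γ}
    (h1 : ∀ a ∈ l, smod (f a) ≤ (M : WithBot Γ))
    (h2 : ∃ a ∈ l, negPart (f a) = (M : WithBot Γ)) :
    negPart (sumS l f) = (M : WithBot Γ) := by
  induction l with
  | nil => rcases h2 with ⟨a, ha, _⟩; exact absurd ha List.not_mem_nil
  | cons a t ih =>
    rw [sumS_cons]
    rcases h2 with ⟨b, hb, hfb⟩
    rcases List.mem_cons.mp hb with rfl | hbt
    · exact negPart_sadd_eq_left hfb (smod_sumS_le fun c hc => h1 c (by simp [hc]))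
    · exact negPart_sadd_eq_right (ih (fun c hc => h1 c (by simp [hc])) ⟨b, hbt, hfb⟩)
        (h1 a (by simp))

lemma sumS_all_none {α : Type} {l : List α} {f : α → Smax Γ}
    (h : ∀ a ∈ l, f a = szero) : sumS l f = szero := by
  induction l with
  | nil => rfl
  | cons a t ih =>
    rw [sumS_cons, h a (by simp), ih fun b hb => h b (by simp [hb])]
    rfl

lemma sumS_none_or {α : Type} {l : List α} {f : α → Smax Γ} {c : Smax Γ}
    (h : ∀ a ∈ l, f a = szero ∨ f a = c) : sumS l f = szero ∨ sumS l f = c := by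
  induction l with
  | nil => exact Or.inl rfl
  | cons a t ih =>
    rw [sumS_cons]
    rcases ih (fun b hb => h b (by simp [hb])) with ht | ht <;>
      rcases h a (by simp) with ha | ha <;> rw [ht, ha]
    · exact Or.inl rfl
    · exact Or.inr (sadd_none_right c)
    · exact Or.inr rfl
    · exact Or.inr (sadd_self c)

lemma sumS_single {α : Type} {l : List α} {f : α → Smax Γ} {i : α}
    (hi : i ∈ l) (h : ∀ j ∈ l, j ≠ i → f j = szero) : sumS l f = f i := by
  induction l with
  | nil => exact absurd hi List.not_mem_nil
  | cons a t ih =>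
    rw [sumS_cons]
    have ht : sumS t f = szero ∨ sumS t f = f i := by
      apply sumS_none_or
      intro b hb
      by_cases hbi : b = i
      · subst hbi; exact Or.inr rfl
      · exact Or.inl (h b (by simp [hb]) hbi)
    by_cases hai : a = i
    · subst hai
      rcases ht with ht | ht <;> rw [ht]
      · exact sadd_none_right _
      · exact sadd_self _
    · rcases List.mem_cons.mp hi with rfl | hit
      · exact absurd rfl hai
      · rw [h a (by simp) hai, ih hit fun j hj => h j (by simp [hj])]
        simp [szero, sadd]

lemma slt_pos_pos_iff {dd cc : Γ} :
    slt (some (dd, SSign.pos) : Smax Γ) (some (cc, SSign.pos)) ↔ dd < cc := by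
  rcases lt_trichotomy cc dd with h | h | h
  · have h2 : ¬ dd < cc := not_lt.2 (le_of_lt h)
    simp [slt, ssub, sneg, sadd, IsPos, szero, h, not_lt.2 (le_of_lt h), h2]
  · subst h
    simp [slt, ssub, sneg, sadd, IsPos, szero]
  · simp [slt, ssub, sneg, sadd, IsPos, szero, h, not_lt.2 (le_of_lt h)]
    exact Option.some_ne_none _

lemma smul_none_right (a : Smax Γ) : smul a (none : Smax Γ) = none := by
  rcases a with _ | a <;> rfl

lemma smul_sone_left (a : Smax Γ) : smul sone a = a := by
  rcases a with _ | ⟨c, s⟩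
  · rfl
  · simp [smul, sone, sgnMul]; rfl

lemma smul_sone_right (a : Smax Γ) : smul a sone = a := by
  rcases a with _ | ⟨c, s⟩
  · rfl
  · rcases s <;> simp [smul, sone, sgnMul] <;> rfl

lemma sgnMul_self {s : SSign} (h : s ≠ SSign.bal) : sgnMul s s = SSign.pos := by
  rcases s with _ | _ | _
  · rfl
  · rfl
  · exact absurd rfl h

lemma half_lt {a b : Γ} (h : a + a < b + b) : a < b := by
  by_contra hc
  exact absurd h (not_lt.2 (add_le_add (not_lt.1 hc) (not_lt.1 hc)))

lemma sumS_congr {α : Type} {l : List α} {f g : α → Smax Γ}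
    (h : ∀ a ∈ l, f a = g a) : sumS l f = sumS l g := by
  induction l with
  | nil => rfl
  | cons a t ih =>
    rw [sumS_cons, sumS_cons, h a (by simp), ih fun b hb => h b (by simp [hb])]

lemma smul_szero_right (a : Smax Γ) : smul a szero = szero := by
  rcases a with _ | a <;> rfl

lemma quadForm_unit {n : ℕ} (A : Matrix (Fin n) (Fin n) (Smax Γ)) (i : Fin n) :
    quadFormS A (fun k => if k = i then sone else szero) = A i i := by
  show sumS (List.finRange n) _ = A i i
  rw [sumS_single (List.mem_finRange i) ?side]
  case side =>
    intro i' _ hi'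
    show sumS (List.finRange n) (fun j => smul (if i' = i then sone else szero)
      (smul (A i' j) (if j = i then sone else szero))) = szero
    apply sumS_all_none
    intro j _
    show smul (if i' = i then sone else szero) _ = szero
    rw [if_neg hi']
    rfl
  show sumS (List.finRange n) (fun j => smul (if i = i then sone else szero)
    (smul (A i j) (if j = i then sone else szero))) = A i i
  rw [sumS_single (List.mem_finRange i) ?side2]
  case side2 =>
    intro j _ hji
    show smul (if i = i then sone else szero) (smul (A i j) (if j = i then sone else szero)) = szero
    rw [if_neg hji, smul_szero_right, smul_szero_right]
  show smul (if i = i then sone else szero) (smul (A i i) (if i = i then sone else szero)) = A i i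
  rw [if_pos rfl, smul_sone_right, smul_sone_left]

/-- the backward direction -/
lemma tpd_of_conds {n : ℕ}
    (A : Matrix (Fin n) (Fin n) (Smax Γ)) (hsgn : MatSigned A)
    (h1 : ∀ i, slt szero (A i i))
    (h2 : ∀ i j, i ≠ j → slt (smul (A i j) (A i j)) (smul (A i i) (A j j))) :
    TPD A := by
  choose c hc using fun i => (slt_szero_iff (A i i)).1 (h1 i)
  intro x hxs hx0
  obtain ⟨k, hk⟩ : ∃ k, x k ≠ szero := by
    by_contra hall
    push_neg at hall
    exact hx0 (funext fun k => hall k)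
  obtain ⟨bk, sk, hbk⟩ : ∃ b s, x k = some (b, s) := by
    rcases hxk : x k with _ | ⟨b, s⟩
    · exact absurd hxk hk
    · exact ⟨b, s, rfl⟩
  set h : Fin n → WithBot Γ := fun i => smod (smul (x i) (smul (A i i) (x i))) with hh
  obtain ⟨i₀, -, hmax⟩ := Finset.exists_max_image Finset.univ h ⟨k, Finset.mem_univ k⟩
  have hmax' : ∀ i, h i ≤ h i₀ := fun i => hmax i (Finset.mem_univ i)
  have hval : ∀ i b s, x i = some (b, s) → h i = ((b + (c i + b) : Γ) : WithBot Γ) := by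
    intro i b s hxi
    show smod (smul (x i) (smul (A i i) (x i))) = _
    rw [hxi, hc i]
    rfl
  obtain ⟨M, hM⟩ : ∃ M : Γ, h i₀ = (M : WithBot Γ) := by
    rcases hM0 : h i₀ with _ | M
    · exfalso
      have h3 := hmax' k
      rw [hM0, hval k bk sk hbk] at h3
      exact WithBot.coe_ne_bot (le_bot_iff.mp h3)
    · exact ⟨M, rfl⟩
  have hbound : ∀ i b s, x i = some (b, s) → b + (c i + b) ≤ M := by
    intro i b s hxi
    have h3 := hmax' i
    rw [hval i b s hxi, hM] at h3
    exact_mod_cast h3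
  -- per-term bounds
  have hterm : ∀ i' j' : Fin n,
      smod (smul (x i') (smul (A i' j') (x j'))) ≤ (M : WithBot Γ) ∧
      negPart (smul (x i') (smul (A i' j') (x j'))) < (M : WithBot Γ) := by
    intro i' j'
    rcases hxi : x i' with _ | ⟨bi, si⟩
    · exact ⟨bot_le, WithBot.bot_lt_coe M⟩
    rcases hxj : x j' with _ | ⟨bj, sj⟩
    · rcases A i' j' with _ | _ <;>
      exact ⟨bot_le, WithBot.bot_lt_coe M⟩
    by_cases hij : i' = j'
    · subst hij
      obtain ⟨rfl, rfl⟩ : bi = bj ∧ si = sj := by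
        have h4 := hxi.symm.trans hxj
        exact ⟨congrArg (fun o => (Option.getD o (bi, si)).1) h4,
          congrArg (fun o => (Option.getD o (bi, si)).2) h4⟩
      have hs : si ≠ SSign.bal := by
        have h5 := hxs i'; rw [hxi] at h5; exact h5
      rw [hc i']
      constructor
      · show ((bi + (c i' + bi) : Γ) : WithBot Γ) ≤ (M : WithBot Γ)
        exact_mod_cast hbound i' bi si hxi
      · show negPart (some (bi + (c i' + bi), sgnMul si (sgnMul SSign.pos si))) < _
        rw [show sgnMul SSign.pos si = si from rfl, sgnMul_self hs]
        exact WithBot.bot_lt_coe M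
    · rcases hA : A i' j' with _ | ⟨d, t⟩
      · exact ⟨bot_le, WithBot.bot_lt_coe M⟩
      have hslt := h2 i' j' hij
      have ht : t ≠ SSign.bal := by
        have h5 := hsgn i' j'; rw [hA] at h5; exact h5
      rw [hA, hc i', hc j'] at hslt
      have e1 : smul (some (d, t) : Smax Γ) (some (d, t)) = some (d + d, SSign.pos) := by
        show some (d + d, sgnMul t t) = _
        rw [sgnMul_self ht]
      have e2 : smul (some (c i', SSign.pos) : Smax Γ) (some (c j', SSign.pos))
          = some (c i' + c j', SSign.pos) := rfl
      rw [e1, e2, slt_pos_pos_iff] at hslt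
      have hkey : bi + (d + bj) < M := by
        apply half_lt
        calc (bi + (d + bj)) + (bi + (d + bj))
            = (bi + bi + bj + bj) + (d + d) := by abel
          _ < (bi + bi + bj + bj) + (c i' + c j') := add_lt_add_right hslt _
          _ = (bi + (c i' + bi)) + (bj + (c j' + bj)) := by abel
          _ ≤ M + M := add_le_add (hbound i' bi si hxi) (hbound j' bj sj hxj)
      constructor
      · show ((bi + (d + bj) : Γ) : WithBot Γ) ≤ _
        exact_mod_cast le_of_lt hkey
      · refine lt_of_le_of_lt (negPart_le_smod _) ?_
        show ((bi + (d + bj) : Γ) : WithBot Γ) < _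
        exact_mod_cast hkey
  -- x i₀ is nonzero and achieves M
  obtain ⟨b₀, s₀, hb₀⟩ : ∃ b s, x i₀ = some (b, s) := by
    rcases hxi₀ : x i₀ with _ | ⟨b, s⟩
    · exfalso
      have h4 : h i₀ = ⊥ := by
        show smod (smul (x i₀) (smul (A i₀ i₀) (x i₀))) = ⊥
        rw [hxi₀]
        rfl
      rw [hM] at h4
      exact WithBot.coe_ne_bot h4
    · exact ⟨b, s, rfl⟩
  have hM' : b₀ + (c i₀ + b₀) = M := by
    have h4 := hval i₀ b₀ s₀ hb₀
    rw [hM] at h4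
    exact_mod_cast h4.symm
  -- assemble
  rw [slt_szero_iff]
  refine ⟨M, ?_⟩
  show sumS (List.finRange n) _ = _
  apply sumS_eq_pos (M := M)
  · intro i' _
    exact ⟨smod_sumS_le fun j' _ => (hterm i' j').1,
      negPart_sumS_lt fun j' _ => (hterm i' j').2⟩
  · refine ⟨i₀, List.mem_finRange i₀, ?_⟩
    apply sumS_eq_pos (M := M)
    · intro j' _
      exact hterm i₀ j'
    · refine ⟨i₀, List.mem_finRange i₀, ?_⟩
      have hs₀ : s₀ ≠ SSign.bal := by
        have h5 := hxs i₀; rw [hb₀] at h5; exact h5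
      rw [hb₀, hc i₀]
      show some (b₀ + (c i₀ + b₀), sgnMul s₀ (sgnMul SSign.pos s₀)) = _
      rw [show sgnMul SSign.pos s₀ = s₀ from rfl, sgnMul_self hs₀, hM']

/-- the forward direction -/
lemma conds_of_tpd {n : ℕ}
    (A : Matrix (Fin n) (Fin n) (Smax Γ)) (hsym : SymmS A) (hsgn : MatSigned A)
    (hT : TPD A) :
    (∀ i, slt szero (A i i)) ∧
      ∀ i j, i ≠ j → slt (smul (A i j) (A i j)) (smul (A i i) (A j j)) := by
  have hdiag : ∀ i, slt szero (A i i) := by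
    intro i
    have hq := hT (fun k => if k = i then sone else szero)
      (fun k => by
        show IsSigned (if k = i then sone else szero)
        by_cases hk : k = i
        · rw [if_pos hk]
          show SSign.pos ≠ SSign.bal
          simp
        · rw [if_neg hk]
          trivial)
      (fun hEq => by
        have h5 := congrFun hEq i
        simp [sone, zeroVecS, szero] at h5)
    rwa [quadForm_unit] at hq
  refine ⟨hdiag, ?_⟩
  intro i j hij
  obtain ⟨ci, hci⟩ := (slt_szero_iff _).1 (hdiag i)
  obtain ⟨cj, hcj⟩ := (slt_szero_iff _).1 (hdiag j)
  rcases hAij : A i j with _ | ⟨d, s⟩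
  · rw [hci, hcj]
    show slt szero (some (ci + cj, SSign.pos))
    exact (slt_szero_iff _).2 ⟨ci + cj, rfl⟩
  · have hs : s ≠ SSign.bal := by
      have h5 := hsgn i j; rw [hAij] at h5; exact h5
    rw [hci, hcj]
    have e1 : smul (some (d, s) : Smax Γ) (some (d, s)) = some (d + d, SSign.pos) := by
      show some (d + d, sgnMul s s) = _
      rw [sgnMul_self hs]
    have e2 : smul (some (ci, SSign.pos) : Smax Γ) (some (cj, SSign.pos))
        = some (ci + cj, SSign.pos) := rfl
    rw [e1, e2, slt_pos_pos_iff]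
    by_contra hcon
    push_neg at hcon
    -- hcon : ci + cj ≤ d + d ; build the bad vector
    set x : Fin n → Smax Γ := fun k =>
      if k = i then some (d - ci, SSign.pos)
      else if k = j then some ((0 : Γ), sgnMul SSign.neg s) else szero with hxdef
    have hxi : x i = some (d - ci, SSign.pos) := by rw [hxdef]; simp; rfl
    have hxj : x j = some ((0 : Γ), sgnMul SSign.neg s) := by
      rw [hxdef]
      simp [Ne.symm hij]; rfl
    have hxo : ∀ k, k ≠ i → k ≠ j → x k = szero := by
      intro k hki hkj
      rw [hxdef]
      simp [hki, hkj]
    have hsj : sgnMul SSign.neg s ≠ SSign.bal := by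
      rcases s with _ | _ | _
      · simp [sgnMul]
      · simp [sgnMul]
      · exact absurd rfl hs
    have hxs : VecSigned x := by
      intro k
      by_cases hki : k = i
      · rw [hki, hxi]
        show SSign.pos ≠ SSign.bal
        simp
      · by_cases hkj : k = j
        · rw [hkj, hxj]
          exact hsj
        · rw [hxo k hki hkj]
          trivial
    have hx0 : x ≠ zeroVecS := by
      intro hEq
      have h4 := congrFun hEq i
      rw [hxi] at h4
      exact absurd h4 (by simp [zeroVecS, szero])
    set M' : Γ := d - ci + (d + 0) with hM'def
    have hcj' : 0 + (cj + 0) ≤ M' := by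
      rw [hM'def]
      calc 0 + (cj + 0) = (ci + cj) - ci := by abel
        _ ≤ (d + d) - ci := sub_le_sub_right hcon ci
        _ = d - ci + (d + 0) := by abel
    -- per-term modulus bounds
    have htermF : ∀ i' j' : Fin n,
        smod (smul (x i') (smul (A i' j') (x j'))) ≤ (M' : WithBot Γ) := by
      intro i' j'
      by_cases hi'i : i' = i
      · subst hi'i
        by_cases hj'i : j' = i'
        · subst hj'i
          rw [hxi, hci]
          show (((d - ci) + (ci + (d - ci)) : Γ) : WithBot Γ) ≤ _
          exact_mod_cast le_of_eq (by rw [hM'def]; abel)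
        · by_cases hj'j : j' = j
          · subst hj'j
            rw [hxi, hxj, hAij]
            show (((d - ci) + (d + 0) : Γ) : WithBot Γ) ≤ _
            exact_mod_cast le_of_eq hM'def.symm
          · rw [hxo j' (by exact hj'i) hj'j, smul_szero_right, smul_szero_right]
            exact bot_le
      · by_cases hi'j : i' = j
        · subst hi'j
          by_cases hj'i : j' = i
          · subst hj'i
            rw [hxi, hxj, hsym i' j', hAij]
            show ((0 + (d + (d - ci)) : Γ) : WithBot Γ) ≤ _
            exact_mod_cast le_of_eq (by rw [hM'def]; abel)
          · by_cases hj'j : j' = i'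
            · subst hj'j
              rw [hxj, hcj]
              show ((0 + (cj + 0) : Γ) : WithBot Γ) ≤ _
              exact_mod_cast hcj'
            · rw [hxo j' hj'i hj'j, smul_szero_right, smul_szero_right]
              exact bot_le
        · rw [hxo i' hi'i hi'j]
          exact bot_le
    have hneg : negPart (quadFormS A x) = (M' : WithBot Γ) := by
      show negPart (sumS (List.finRange n) _) = _
      apply negPart_sumS_eq
      · intro i' _
        exact smod_sumS_le fun j' _ => htermF i' j'
      · refine ⟨i, List.mem_finRange i, ?_⟩
        apply negPart_sumS_eq
        · intro j' _
          exact htermF i j'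
        · refine ⟨j, List.mem_finRange j, ?_⟩
          rw [hxi, hxj, hAij]
          have hneg2 : sgnMul s (sgnMul SSign.neg s) = SSign.neg := by
            rcases s with _ | _ | _
            · rfl
            · rfl
            · exact absurd rfl hs
          show negPart (some ((d - ci) + (d + 0), sgnMul s (sgnMul SSign.neg s))) = _
          rw [hneg2]
          rfl
    obtain ⟨e, he⟩ := (slt_szero_iff _).1 (hT x hxs hx0)
    rw [he] at hneg
    exact absurd hneg (by simp [negPart])

end Aux
/-- a symmetric matrix over 𝕊max^∨ is tropical positive definite
iff its diagonal entries are positive nonzero and a_{ij}⊙a_{ij} < a_{ii}⊙a_{jj}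
for all i ≠ j. -/
theorem tpd_characterization {Γ : Type} [AddCommGroup Γ] [LinearOrder Γ] [IsOrderedAddMonoid Γ] [Nontrivial Γ]
    (hdiv : DivisibleGrp Γ) {n : ℕ} (hn : 1 ≤ n)
    (A : Matrix (Fin n) (Fin n) (Smax Γ)) (hsym : SymmS A) (hsgn : MatSigned A) :
    TPD A ↔
      ((∀ i, slt szero (A i i)) ∧
        ∀ i j, i ≠ j → slt (smul (A i j) (A i j)) (smul (A i i) (A j j))) := by
  constructor
  · exact fun hT => conds_of_tpd A hsym hsgn hT
  · exact fun ⟨h1, h2⟩ => tpd_of_conds A hsgn h1 h2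

end TropPaper
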